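/- Suppose every job j in a job set J' for a two-machine flow shop satisfies p_{1j} + p_{2j} ≤ C'/ρ with ρ = 3/2, the Johnson schedule of J' has makespan C', and max( sum_{j∈J'} p_{1j}, sum_{j∈J'} p_{2j} ) ≤ (1+ε)·L for some L > 0 with L ≤ C* where C* is a makespan lower bound satisfying max-machine-load ≤ C*. Then C' ≤ (3/2)(1+ε)·C*. -/
import Mathlib


open Finset

/-- If every job of a two-machine job set satisfies
`p₁ j + p₂ j ≤ C' / ρ` with `ρ = 3/2`, the Johnson schedule has makespan `C'`
(with critical job `ν`), and both machine loads are at most `(1+ε)·L` with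
`0 < L ≤ C*` (where `C*` is a makespan lower bound dominating the machine
loads), then `C' ≤ (3/2)(1+ε)·C*`. -/
theorem par_case_analysis_two_machines
    (n : ℕ) (p1 p2 : Fin n → ℝ)
    (hp1 : ∀ j, 0 ≤ p1 j) (hp2 : ∀ j, 0 ≤ p2 j)
    -- Johnson order: every job scheduled after a job with `p₁ ≥ p₂` also
    -- satisfies `p₁ ≥ p₂`
    (hJ : ∀ k l : Fin n, k < l → p2 k ≤ p1 k → p2 l ≤ p1 l)
    (C' L Cstar ε : ℝ) (hε : 0 ≤ ε) (hL : 0 < L) (hLC : L ≤ Cstar)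
    (hload : max (∑ j, p1 j) (∑ j, p2 j) ≤ (1 + ε) * L)
    (hloadC : max (∑ j, p1 j) (∑ j, p2 j) ≤ Cstar)
    (hjobs : ∀ j, p1 j + p2 j ≤ C' / (3 / 2 : ℝ))
    (ν : Fin n)
    (hC' : C' = (∑ j ∈ Finset.univ.filter (fun j => j ≤ ν), p1 j) +
                (∑ j ∈ Finset.univ.filter (fun j => ν ≤ j), p2 j)) :
    C' ≤ (3 / 2) * (1 + ε) * Cstar := by
  have hLoad1 : (∑ j, p1 j) ≤ (1 + ε) * Cstar :=
    le_trans (le_trans (le_max_left _ _) hload)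
      (by nlinarith)
  have hLoad2 : (∑ j, p2 j) ≤ (1 + ε) * Cstar :=
    le_trans (le_trans (le_max_right _ _) hload)
      (by nlinarith)
  have hν := hjobs ν
  -- set decomposition lemmas
  have hge : Finset.univ.filter (fun j => ν ≤ j) =
      insert ν (Finset.univ.filter (fun j => ν < j)) := by
    ext j
    simp only [mem_filter, mem_univ, true_and, mem_insert]
    constructor
    · intro h
      rcases eq_or_lt_of_le h with h | h
      · exact Or.inl h.symm
      · exact Or.inr h
    · rintro (rfl | h)
      · exact le_refl _
      · exact le_of_lt h
  have hle : Finset.univ.filter (fun j => j ≤ ν) =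
      insert ν (Finset.univ.filter (fun j => j < ν)) := by
    ext j
    simp only [mem_filter, mem_univ, true_and, mem_insert]
    constructor
    · intro h
      rcases eq_or_lt_of_le h with h | h
      · exact Or.inl h
      · exact Or.inr h
    · rintro (rfl | h)
      · exact le_refl _
      · exact le_of_lt h
  have hsum_ge : (∑ j ∈ Finset.univ.filter (fun j => ν ≤ j), p2 j) =
      p2 ν + ∑ j ∈ Finset.univ.filter (fun j => ν < j), p2 j := by
    rw [hge, Finset.sum_insert (by simp)]
  have hsum_le : (∑ j ∈ Finset.univ.filter (fun j => j ≤ ν), p1 j) =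
      p1 ν + ∑ j ∈ Finset.univ.filter (fun j => j < ν), p1 j := by
    rw [hle, Finset.sum_insert (by simp)]
  by_cases hcase : p2 ν ≤ p1 ν
  · -- later jobs also have p2 ≤ p1
    have hcomp : (∑ j ∈ Finset.univ.filter (fun j => ν < j), p2 j)
        ≤ ∑ j ∈ Finset.univ.filter (fun j => ν < j), p1 j :=
      Finset.sum_le_sum fun j hj => hJ ν j (mem_filter.mp hj).2 hcase
    have hsplit : (∑ j ∈ Finset.univ.filter (fun j => j ≤ ν), p1 j) +
        (∑ j ∈ Finset.univ.filter (fun j => ν < j), p1 j) = ∑ j, p1 j := by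
      have := Finset.sum_filter_add_sum_filter_not Finset.univ
        (fun j => j ≤ ν) p1
      simpa only [not_le] using this
    have : C' ≤ (∑ j, p1 j) + p2 ν := by
      rw [hC', hsum_ge]; linarith
    linarith
  · -- earlier jobs have p1 < p2
    push_neg at hcase
    have hcomp : (∑ j ∈ Finset.univ.filter (fun j => j < ν), p1 j)
        ≤ ∑ j ∈ Finset.univ.filter (fun j => j < ν), p2 j := by
      refine Finset.sum_le_sum fun j hj => ?_
      by_contra h
      push_neg at h
      exact absurd (hJ j ν (mem_filter.mp hj).2 h.le) (not_le.mpr hcase)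
    have hsplit : (∑ j ∈ Finset.univ.filter (fun j => j < ν), p2 j) +
        (∑ j ∈ Finset.univ.filter (fun j => ν ≤ j), p2 j) = ∑ j, p2 j := by
      have := Finset.sum_filter_add_sum_filter_not Finset.univ
        (fun j => j < ν) p2
      simpa only [not_lt] using this
    have : C' ≤ (∑ j, p2 j) + p1 ν := by
      rw [hC', hsum_le]; linarith
    linarith
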